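/- Assume R₁ > 1, R₁ > R₂ and R₁ > R₃. Then there exists a unique point x = (y₁, y₂, y₃, v₁, v₂, v₃) ∈ ℝ⁶ with all six coordinates positive satisfying F(x) = 0. Its first coordinate is ŷ₁ = (1 − 1/R₁) / (1 + (p₂/q₂)·R₂/(R₁−R₂) + (p₂q₃/(q₂r₃))·R₂R₃/((R₁−R₂)(R₁−R₃))), and the remaining coordinates are ŷ₂ = (p₂/q₂)·(R₂/(R₁−R₂))·ŷ₁, ŷ₃ = (p₂q₃/(q₂r₃))·(R₂R₃/((R₁−R₂)(R₁−R₃)))·ŷ₁, v̂₁ = (p₁/c)·ŷ₁, v̂₂ = (p₂ŷ₁ + q₂ŷ₂)/c, v̂₃ = (q₃ŷ₂ + r₃ŷ₃)/c. -/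

import Mathlib

/-- The HBV three-strain vector field `F(y₁,y₂,y₃,v₁,v₂,v₃)`, with `β = 1 − y₁ − y₂ − y₃`. -/
noncomputable def Fhbv (α₁ α₂ α₃ δ₁ δ₂ δ₃ c p₁ p₂ q₂ q₃ r₃ : ℝ) (x : Fin 6 → ℝ) :
    Fin 6 → ℝ :=
  ![α₁ * (1 - x 0 - x 1 - x 2) * x 3 - δ₁ * x 0,
    α₂ * (1 - x 0 - x 1 - x 2) * x 4 - δ₂ * x 1,
    α₃ * (1 - x 0 - x 1 - x 2) * x 5 - δ₃ * x 2,
    p₁ * x 0 - c * x 3,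
    p₂ * x 0 + q₂ * x 1 - c * x 4,
    q₃ * x 1 + r₃ * x 2 - c * x 5]

/-- Auxiliary linear elimination for the HBV system. -/
lemma lin_master (P C A2 A3 D2 D3 a b d : ℝ)
    (h1 : P * (1 - a - b - d) = C) (h2 : A2 * a = D2 * b) (h3 : A3 * b = D3 * d) :
    P * (D2 * D3 + A2 * D3 + A2 * A3) * a = (P - C) * (D2 * D3) := by
  linear_combination (-(D2 * D3)) * h1 + (P * (D3 + A3)) * h2 + (P * D2) * h3

set_option maxHeartbeats 1600000 in
/-- if R₁ > 1, R₁ > R₂ and R₁ > R₃, there exists a unique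
coordinatewise-positive zero of F, given by the explicit formulas. -/
theorem stmt_11 (α₁ α₂ α₃ δ₁ δ₂ δ₃ c p₁ p₂ q₂ q₃ r₃ : ℝ)
    (hα₁ : 0 < α₁) (hα₂ : 0 < α₂) (hα₃ : 0 < α₃)
    (hδ₁ : 0 < δ₁) (hδ₂ : 0 < δ₂) (hδ₃ : 0 < δ₃) (hc : 0 < c)
    (hp₁ : 0 < p₁) (hp₂ : 0 < p₂) (hq₂ : 0 < q₂) (hq₃ : 0 < q₃) (hr₃ : 0 < r₃)
    (hR₁ : 1 < α₁ * p₁ / (c * δ₁))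
    (h12 : α₂ * q₂ / (c * δ₂) < α₁ * p₁ / (c * δ₁))
    (h13 : α₃ * r₃ / (c * δ₃) < α₁ * p₁ / (c * δ₁)) :
    let R₁ : ℝ := α₁ * p₁ / (c * δ₁)
    let R₂ : ℝ := α₂ * q₂ / (c * δ₂)
    let R₃ : ℝ := α₃ * r₃ / (c * δ₃)
    let y₁ : ℝ := (1 - 1 / R₁) /
      (1 + (p₂ / q₂) * R₂ / (R₁ - R₂) +
        (p₂ * q₃ / (q₂ * r₃)) * (R₂ * R₃ / ((R₁ - R₂) * (R₁ - R₃))))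
    let y₂ : ℝ := (p₂ / q₂) * (R₂ / (R₁ - R₂)) * y₁
    let y₃ : ℝ := (p₂ * q₃ / (q₂ * r₃)) * (R₂ * R₃ / ((R₁ - R₂) * (R₁ - R₃))) * y₁
    let v₁ : ℝ := (p₁ / c) * y₁
    let v₂ : ℝ := (p₂ * y₁ + q₂ * y₂) / c
    let v₃ : ℝ := (q₃ * y₂ + r₃ * y₃) / c
    let x₁ : Fin 6 → ℝ := ![y₁, y₂, y₃, v₁, v₂, v₃]
    (∀ i, 0 < x₁ i) ∧
      Fhbv α₁ α₂ α₃ δ₁ δ₂ δ₃ c p₁ p₂ q₂ q₃ r₃ x₁ = 0 ∧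
      ∀ x : Fin 6 → ℝ, (∀ i, 0 < x i) →
        Fhbv α₁ α₂ α₃ δ₁ δ₂ δ₃ c p₁ p₂ q₂ q₃ r₃ x = 0 → x = x₁ := by
  intro R₁ R₂ R₃ y₁ y₂ y₃ v₁ v₂ v₃ x₁
  -- basic parameter inequalities
  have hcδ₁ : (0:ℝ) < c * δ₁ := by positivity
  have hP : (0:ℝ) < α₁ * p₁ := by positivity
  have h1' : c * δ₁ < α₁ * p₁ := (one_lt_div hcδ₁).mp hR₁
  have hD2 : α₂ * q₂ * δ₁ < α₁ * p₁ * δ₂ := by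
    have h := (div_lt_div_iff₀ (by positivity) (by positivity)).mp h12
    nlinarith
  have hD3 : α₃ * r₃ * δ₁ < α₁ * p₁ * δ₃ := by
    have h := (div_lt_div_iff₀ (by positivity) (by positivity)).mp h13
    nlinarith
  have hD2p : (0:ℝ) < α₁ * p₁ * δ₂ - α₂ * q₂ * δ₁ := by linarith
  have hD3p : (0:ℝ) < α₁ * p₁ * δ₃ - α₃ * r₃ * δ₁ := by linarith
  have hA2p : (0:ℝ) < α₂ * p₂ * δ₁ := by positivity
  have hA3p : (0:ℝ) < α₃ * q₃ * δ₁ := by positivity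
  have hSp : (0:ℝ) < (α₁ * p₁ * δ₂ - α₂ * q₂ * δ₁) * (α₁ * p₁ * δ₃ - α₃ * r₃ * δ₁)
      + α₂ * p₂ * δ₁ * (α₁ * p₁ * δ₃ - α₃ * r₃ * δ₁) + α₂ * p₂ * δ₁ * (α₃ * q₃ * δ₁) := by
    have := mul_pos hD2p hD3p
    have := mul_pos hA2p hD3p
    have := mul_pos hA2p hA3p
    linarith
  have hKp : (0:ℝ) < α₁ * p₁ * ((α₁ * p₁ * δ₂ - α₂ * q₂ * δ₁) * (α₁ * p₁ * δ₃ - α₃ * r₃ * δ₁)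
      + α₂ * p₂ * δ₁ * (α₁ * p₁ * δ₃ - α₃ * r₃ * δ₁) + α₂ * p₂ * δ₁ * (α₃ * q₃ * δ₁)) :=
    mul_pos hP hSp
  -- rewriting the R-expressions into rational normal forms
  have hOne : 1 - 1 / R₁ = (α₁ * p₁ - c * δ₁) / (α₁ * p₁) := by
    show 1 - 1 / (α₁ * p₁ / (c * δ₁)) = _
    rw [one_div_div]
    field_simp
  have e2 : α₁ * p₁ / (c * δ₁) - α₂ * q₂ / (c * δ₂)
      = (α₁ * p₁ * δ₂ - α₂ * q₂ * δ₁) / (c * δ₁ * δ₂) := by field_simp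
  have e3 : α₁ * p₁ / (c * δ₁) - α₃ * r₃ / (c * δ₃)
      = (α₁ * p₁ * δ₃ - α₃ * r₃ * δ₁) / (c * δ₁ * δ₃) := by field_simp
  have hAeq : (p₂ / q₂) * R₂ / (R₁ - R₂)
      = α₂ * p₂ * δ₁ / (α₁ * p₁ * δ₂ - α₂ * q₂ * δ₁) := by
    show (p₂ / q₂) * (α₂ * q₂ / (c * δ₂)) / (α₁ * p₁ / (c * δ₁) - α₂ * q₂ / (c * δ₂)) = _
    rw [e2]
    field_simp
  have hAeq' : (p₂ / q₂) * (R₂ / (R₁ - R₂))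
      = α₂ * p₂ * δ₁ / (α₁ * p₁ * δ₂ - α₂ * q₂ * δ₁) := by
    rw [← hAeq]; ring
  have hBeq : (p₂ * q₃ / (q₂ * r₃)) * (R₂ * R₃ / ((R₁ - R₂) * (R₁ - R₃)))
      = α₂ * p₂ * δ₁ * (α₃ * q₃ * δ₁)
        / ((α₁ * p₁ * δ₂ - α₂ * q₂ * δ₁) * (α₁ * p₁ * δ₃ - α₃ * r₃ * δ₁)) := by
    show (p₂ * q₃ / (q₂ * r₃)) * ((α₂ * q₂ / (c * δ₂)) * (α₃ * r₃ / (c * δ₃)) /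
      ((α₁ * p₁ / (c * δ₁) - α₂ * q₂ / (c * δ₂)) * (α₁ * p₁ / (c * δ₁) - α₃ * r₃ / (c * δ₃)))) = _
    rw [e2, e3]
    rw [div_mul_div_comm]
    field_simp
  -- explicit formula for y₁
  have hy1 : y₁ = (α₁ * p₁ - c * δ₁) / (α₁ * p₁) /
      (1 + α₂ * p₂ * δ₁ / (α₁ * p₁ * δ₂ - α₂ * q₂ * δ₁)
        + α₂ * p₂ * δ₁ * (α₃ * q₃ * δ₁)
        / ((α₁ * p₁ * δ₂ - α₂ * q₂ * δ₁) * (α₁ * p₁ * δ₃ - α₃ * r₃ * δ₁))) := by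
    show (1 - 1 / R₁) / (1 + (p₂ / q₂) * R₂ / (R₁ - R₂) +
        (p₂ * q₃ / (q₂ * r₃)) * (R₂ * R₃ / ((R₁ - R₂) * (R₁ - R₃)))) = _
    rw [hOne, hAeq, hBeq]
  have hDenpos : (0:ℝ) < 1 + α₂ * p₂ * δ₁ / (α₁ * p₁ * δ₂ - α₂ * q₂ * δ₁)
      + α₂ * p₂ * δ₁ * (α₃ * q₃ * δ₁)
      / ((α₁ * p₁ * δ₂ - α₂ * q₂ * δ₁) * (α₁ * p₁ * δ₃ - α₃ * r₃ * δ₁)) := by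
    have h1 : (0:ℝ) < α₂ * p₂ * δ₁ / (α₁ * p₁ * δ₂ - α₂ * q₂ * δ₁) := div_pos hA2p hD2p
    have h2 : (0:ℝ) < α₂ * p₂ * δ₁ * (α₃ * q₃ * δ₁)
        / ((α₁ * p₁ * δ₂ - α₂ * q₂ * δ₁) * (α₁ * p₁ * δ₃ - α₃ * r₃ * δ₁)) :=
      div_pos (mul_pos hA2p hA3p) (mul_pos hD2p hD3p)
    linarith
  have hy1pos : 0 < y₁ := by
    rw [hy1]
    exact div_pos (div_pos (by linarith) hP) hDenpos
  have hy2 : y₂ = α₂ * p₂ * δ₁ / (α₁ * p₁ * δ₂ - α₂ * q₂ * δ₁) * y₁ := by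
    show (p₂ / q₂) * (R₂ / (R₁ - R₂)) * y₁ = _
    rw [hAeq']
  have hy3 : y₃ = α₂ * p₂ * δ₁ * (α₃ * q₃ * δ₁)
      / ((α₁ * p₁ * δ₂ - α₂ * q₂ * δ₁) * (α₁ * p₁ * δ₃ - α₃ * r₃ * δ₁)) * y₁ := by
    show (p₂ * q₃ / (q₂ * r₃)) * (R₂ * R₃ / ((R₁ - R₂) * (R₁ - R₃))) * y₁ = _
    rw [hBeq]
  have hy2pos : 0 < y₂ := by
    rw [hy2]; exact mul_pos (div_pos hA2p hD2p) hy1pos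
  have hy3pos : 0 < y₃ := by
    rw [hy3]; exact mul_pos (div_pos (mul_pos hA2p hA3p) (mul_pos hD2p hD3p)) hy1pos
  have hv1 : v₁ = p₁ / c * y₁ := rfl
  have hv2 : v₂ = (p₂ * y₁ + q₂ * y₂) / c := rfl
  have hv3 : v₃ = (q₃ * y₂ + r₃ * y₃) / c := rfl
  have hv1pos : 0 < v₁ := by rw [hv1]; positivity
  have hv2pos : 0 < v₂ := by rw [hv2]; positivity
  have hv3pos : 0 < v₃ := by rw [hv3]; positivity
  -- the three polynomial identities satisfied by the explicit point
  have hsum : y₁ + y₂ + y₃ = (α₁ * p₁ - c * δ₁) / (α₁ * p₁) := by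
    have : y₁ * (1 + α₂ * p₂ * δ₁ / (α₁ * p₁ * δ₂ - α₂ * q₂ * δ₁)
        + α₂ * p₂ * δ₁ * (α₃ * q₃ * δ₁)
        / ((α₁ * p₁ * δ₂ - α₂ * q₂ * δ₁) * (α₁ * p₁ * δ₃ - α₃ * r₃ * δ₁)))
        = (α₁ * p₁ - c * δ₁) / (α₁ * p₁) := by
      rw [hy1]
      exact div_mul_cancel₀ _ hDenpos.ne'
    rw [← this, hy2, hy3]
    ring
  have H1 : α₁ * p₁ * (1 - y₁ - y₂ - y₃) = c * δ₁ := by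
    have hs := hsum
    field_simp [hP.ne'] at hs
    linear_combination -hs
  have H2 : α₂ * p₂ * δ₁ * y₁ = (α₁ * p₁ * δ₂ - α₂ * q₂ * δ₁) * y₂ := by
    rw [hy2]
    generalize α₁ * p₁ * δ₂ - α₂ * q₂ * δ₁ = D at hD2p ⊢
    field_simp
  have H3 : α₃ * q₃ * δ₁ * y₂ = (α₁ * p₁ * δ₃ - α₃ * r₃ * δ₁) * y₃ := by
    rw [hy2, hy3]
    generalize α₁ * p₁ * δ₂ - α₂ * q₂ * δ₁ = D at hD2p ⊢
    generalize α₁ * p₁ * δ₃ - α₃ * r₃ * δ₁ = E at hD3p ⊢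
    field_simp
  have hβ : 1 - y₁ - y₂ - y₃ = c * δ₁ / (α₁ * p₁) := by
    rw [eq_div_iff hP.ne']
    linarith [H1]
  have hx₁d : x₁ = ![y₁, y₂, y₃, v₁, v₂, v₃] := rfl
  clear_value x₁ v₃ v₂ v₁ y₃ y₂ y₁ R₃ R₂ R₁
  refine ⟨?_, ?_, ?_⟩
  · intro i
    rw [hx₁d]
    fin_cases i
    · exact hy1pos
    · exact hy2pos
    · exact hy3pos
    · exact hv1pos
    · exact hv2pos
    · exact hv3pos
  · rw [hx₁d]
    funext i
    fin_cases i
    · show α₁ * (1 - y₁ - y₂ - y₃) * v₁ - δ₁ * y₁ = 0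
      rw [hβ, hv1]
      field_simp
      ring
    · show α₂ * (1 - y₁ - y₂ - y₃) * v₂ - δ₂ * y₂ = 0
      rw [hβ, hv2]
      field_simp
      linear_combination H2
    · show α₃ * (1 - y₁ - y₂ - y₃) * v₃ - δ₃ * y₃ = 0
      rw [hβ, hv3]
      field_simp
      linear_combination H3
    · show p₁ * y₁ - c * v₁ = 0
      rw [hv1]; field_simp; ring
    · show p₂ * y₁ + q₂ * y₂ - c * v₂ = 0
      rw [hv2]; field_simp; ring
    · show q₃ * y₂ + r₃ * y₃ - c * v₃ = 0
      rw [hv3]; field_simp; ring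
  · intro x hxpos hxz
    have e0 : α₁ * (1 - x 0 - x 1 - x 2) * x 3 - δ₁ * x 0 = 0 := congrFun hxz 0
    have e1 : α₂ * (1 - x 0 - x 1 - x 2) * x 4 - δ₂ * x 1 = 0 := congrFun hxz 1
    have e2' : α₃ * (1 - x 0 - x 1 - x 2) * x 5 - δ₃ * x 2 = 0 := congrFun hxz 2
    have e3' : p₁ * x 0 - c * x 3 = 0 := congrFun hxz 3
    have e4 : p₂ * x 0 + q₂ * x 1 - c * x 4 = 0 := congrFun hxz 4
    have e5 : q₃ * x 1 + r₃ * x 2 - c * x 5 = 0 := congrFun hxz 5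
    have hz1 : (α₁ * p₁ * (1 - x 0 - x 1 - x 2) - c * δ₁) * (x 0 * x 3) = 0 := by
      linear_combination (p₁ * x 0) * e0 + (δ₁ * x 0) * e3'
    have h1 : α₁ * p₁ * (1 - x 0 - x 1 - x 2) = c * δ₁ := by
      rcases mul_eq_zero.mp hz1 with h | h
      · linarith [sub_eq_zero.mp h]
      · exact absurd h (mul_pos (hxpos 0) (hxpos 3)).ne'
    have hz2 : c * (α₂ * p₂ * δ₁ * x 0 - (α₁ * p₁ * δ₂ - α₂ * q₂ * δ₁) * x 1) = 0 := by
      linear_combination (α₁ * p₁ * c) * e1 + (-(α₂ * c * x 4)) * h1 + (α₂ * c * δ₁) * e4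
    have h2 : α₂ * p₂ * δ₁ * x 0 = (α₁ * p₁ * δ₂ - α₂ * q₂ * δ₁) * x 1 := by
      have h := (mul_eq_zero.mp hz2).resolve_left hc.ne'
      linarith [sub_eq_zero.mp h]
    have hz3 : c * (α₃ * q₃ * δ₁ * x 1 - (α₁ * p₁ * δ₃ - α₃ * r₃ * δ₁) * x 2) = 0 := by
      linear_combination (α₁ * p₁ * c) * e2' + (-(α₃ * c * x 5)) * h1 + (α₃ * c * δ₁) * e5
    have h3 : α₃ * q₃ * δ₁ * x 1 = (α₁ * p₁ * δ₃ - α₃ * r₃ * δ₁) * x 2 := by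
      have h := (mul_eq_zero.mp hz3).resolve_left hc.ne'
      linarith [sub_eq_zero.mp h]
    have mX := lin_master (α₁ * p₁) (c * δ₁) (α₂ * p₂ * δ₁) (α₃ * q₃ * δ₁)
      (α₁ * p₁ * δ₂ - α₂ * q₂ * δ₁) (α₁ * p₁ * δ₃ - α₃ * r₃ * δ₁) (x 0) (x 1) (x 2) h1 h2 h3
    have mY := lin_master (α₁ * p₁) (c * δ₁) (α₂ * p₂ * δ₁) (α₃ * q₃ * δ₁)
      (α₁ * p₁ * δ₂ - α₂ * q₂ * δ₁) (α₁ * p₁ * δ₃ - α₃ * r₃ * δ₁) y₁ y₂ y₃ H1 H2 H3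
    have hx0 : x 0 = y₁ := by
      apply mul_left_cancel₀ hKp.ne'
      rw [mX, mY]
    have hx1 : x 1 = y₂ := by
      apply mul_left_cancel₀ hD2p.ne'
      rw [← h2, hx0, H2]
    have hx2 : x 2 = y₃ := by
      apply mul_left_cancel₀ hD3p.ne'
      rw [← h3, hx1, H3]
    have hx3 : x 3 = v₁ := by
      apply mul_left_cancel₀ hc.ne'
      have hcv : c * v₁ = p₁ * y₁ := by rw [hv1]; field_simp
      rw [hcv, ← hx0]
      linarith [e3']
    have hx4 : x 4 = v₂ := by
      apply mul_left_cancel₀ hc.ne'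
      have hcv : c * v₂ = p₂ * y₁ + q₂ * y₂ := by rw [hv2]; field_simp
      rw [hcv, ← hx0, ← hx1]
      linarith [e4]
    have hx5 : x 5 = v₃ := by
      apply mul_left_cancel₀ hc.ne'
      have hcv : c * v₃ = q₃ * y₂ + r₃ * y₃ := by rw [hv3]; field_simp
      rw [hcv, ← hx1, ← hx2]
      linarith [e5]
    rw [hx₁d]
    funext i
    fin_cases i
    · exact hx0
    · exact hx1
    · exact hx2
    · exact hx3
    · exact hx4
    · exact hx5
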